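/- Let F(S) be the free group on a set S, and let U be the free product of copies of Z/2Z indexed by S (the universal Coxeter group). Define φ from the free involutory quandle D(S^U) to the core quandle Core(F(S)) by sending the left-associated product x_n * x_{n-1} * ... * x_1 (with x_i ∈ S, x_i ≠ x_{i+1}) to x_1^{d_1} x_2^{d_2} ... x_n^{d_n} ... x_2^{d_2} x_1^{d_1}, where d_i = (-1)^{i+1}. Then φ is an injective quandle homomorphism. -/

import Mathlib

/-- The set of all conjugates of elements of `S` in `G`. -/
def conjSet (G : Type*) [Group G] (S : Set G) : Set G :=
  {x | ∃ s ∈ S, ∃ g : G, x = g * s * g⁻¹}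

theorem conjSet.conj_mem {G : Type*} [Group G] {S : Set G} {x : G}
    (hx : x ∈ conjSet G S) (g : G) : g * x * g⁻¹ ∈ conjSet G S := by
  obtain ⟨s, hs, h, rfl⟩ := hx
  exact ⟨s, hs, g * h, by group⟩

/-- The Dehn quandle operation `x * y = y x y⁻¹` on the set of conjugates of `S`. -/
def dehnOp {G : Type*} [Group G] {S : Set G} (x y : conjSet G S) : conjSet G S :=
  ⟨(y : G) * (x : G) * (y : G)⁻¹, conjSet.conj_mem x.2 (y : G)⟩

/-- The universal Coxeter group on `S`: the free product of copies of `ℤ/2` indexed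
by `S`, presented by the relations `s² = 1`. -/
abbrev UCox (S : Type*) : Type _ :=
  PresentedGroup {r : FreeGroup S | ∃ s : S, r = (FreeGroup.of s) ^ 2}

theorem UCox.of_mem_conjSet {S : Type*} (s : S) :
    (PresentedGroup.of s : UCox S) ∈
      conjSet (UCox S) (Set.range (PresentedGroup.of : S → UCox S)) :=
  ⟨PresentedGroup.of s, ⟨s, rfl⟩, 1, by group⟩

namespace FIQAux

open FreeGroup

theorem invRev_append' {α : Type*} (A B : List (α × Bool)) :
    invRev (A ++ B) = invRev B ++ invRev A := by
  simp [invRev]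

theorem invRev_cons' {α : Type*} (m : α × Bool) (B : List (α × Bool)) :
    invRev (m :: B) = invRev B ++ [(m.1, !m.2)] := by
  simp [invRev]

/-- Free groups have no 2-torsion. -/
theorem freeGroup_sq_eq_one {α : Type*} {u : FreeGroup α} (h : u * u = 1) : u = 1 := by
  classical
  have hinv : u⁻¹ = u := by rw [inv_eq_iff_mul_eq_one]; exact h
  have hw : invRev u.toWord = u.toWord := by rw [← toWord_inv, hinv]
  by_contra hne
  have hL : u.toWord ≠ [] := fun hnil => hne (toWord_eq_nil_iff.mp hnil)
  set L := u.toWord with hLdef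
  have hred : reduce L = L := reduce_toWord u
  rcases Nat.even_or_odd L.length with ⟨k, hk⟩ | ⟨k, hk⟩
  · -- even length
    have hkpos : 0 < k := by
      rcases Nat.eq_zero_or_pos k with rfl | h
      · exact absurd (List.length_eq_zero_iff.mp (by omega)) hL
      · exact h
    have hAB : L.take k ++ L.drop k = L := List.take_append_drop k L
    have hlenA : (L.take k).length = k := by rw [List.length_take]; omega
    have hlenB : (L.drop k).length = k := by rw [List.length_drop]; omega
    have heq : invRev (L.drop k) ++ invRev (L.take k) = L.take k ++ L.drop k := by
      rw [← invRev_append', hAB]; exact hw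
    have hlen' : (invRev (L.drop k)).length = (L.take k).length := by
      rw [invRev_length, hlenA, hlenB]
    obtain ⟨h1, _⟩ := List.append_inj heq hlen'
    have hBne : L.drop k ≠ [] := by
      intro hb; rw [hb] at hlenB; simp at hlenB; omega
    obtain ⟨m, B', hB'⟩ := List.exists_cons_of_ne_nil hBne
    have hLshape : L = invRev B' ++ (m.1, !m.2) :: (m.1, !(!m.2)) :: B' := by
      conv_lhs => rw [← hAB, ← h1, hB', invRev_cons']
      rw [Bool.not_not]
      simp
    exact reduce.not (hred.trans hLshape)
  · -- odd length
    have hk' : k < L.length := by omega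
    have hd : L.drop k = L[k] :: L.drop (k + 1) := List.drop_eq_getElem_cons hk'
    have hsplit0 : L = L.take k ++ L[k] :: L.drop (k + 1) := by
      conv_lhs => rw [← List.take_append_drop k L]
      rw [hd]
    have hlenA : (L.take k).length = k := by rw [List.length_take]; omega
    have hlenB : (L.drop (k + 1)).length = k := by rw [List.length_drop]; omega
    obtain ⟨A, m, B, hsplit, hlA, hlB⟩ :
        ∃ (A : List (α × Bool)) (m : α × Bool) (B : List (α × Bool)), L = A ++ m :: B ∧ A.length = k ∧ B.length = k :=
      ⟨_, _, _, hsplit0, hlenA, hlenB⟩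
    have hw2 : invRev (A ++ m :: B) = A ++ m :: B := by rw [← hsplit]; exact hw
    rw [invRev_append', invRev_cons'] at hw2
    have heq : invRev B ++ (m.1, !m.2) :: invRev A = A ++ m :: B := by
      rw [← hw2]; simp
    have hlen' : (invRev B).length = A.length := by rw [invRev_length, hlA, hlB]
    obtain ⟨_, h2⟩ := List.append_inj heq hlen'
    have hmm : (m.1, !m.2) = m := (List.cons.injEq _ _ _ _ ▸ h2).1
    have := congrArg Prod.snd hmm
    simp at this

section Main

variable {S : Type*}

/-- The universal Coxeter group (matching the statement's relation set). -/
abbrev UCox' (S : Type*) : Type _ :=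
  PresentedGroup {r : FreeGroup S | ∃ s : S, r = (FreeGroup.of s) ^ 2}

/-- Anti-conjugation by `a` : `w ↦ a * w⁻¹ * a`, an involutive permutation. -/
def ac {G : Type*} [Group G] (a : G) : Equiv.Perm G :=
  Function.Involutive.toPerm (fun w => a * w⁻¹ * a) (fun w => by
    simp only [mul_inv_rev, inv_inv]
    group)

@[simp] lemma ac_apply {G : Type*} [Group G] (a w : G) : ac a w = a * w⁻¹ * a := rfl

lemma ac_mul_self {G : Type*} [Group G] (a : G) : ac a * ac a = 1 := by
  ext w
  simp only [Equiv.Perm.mul_apply, ac_apply, Equiv.Perm.one_apply, mul_inv_rev, inv_inv]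
  group

lemma rels_check {G : Type*} [Group G] (f : S → G) (hf : ∀ s, f s * f s = 1) :
    ∀ r ∈ {r : FreeGroup S | ∃ s : S, r = (FreeGroup.of s) ^ 2}, FreeGroup.lift f r = 1 := by
  rintro r ⟨s, rfl⟩
  rw [_root_.map_pow, FreeGroup.lift_apply_of, sq, hf]

/-- The action of `UCox' S` on `FreeGroup S` by anti-conjugations. -/
noncomputable def rho : UCox' S →* Equiv.Perm (FreeGroup S) :=
  PresentedGroup.toGroup (f := fun s => ac (FreeGroup.of s))
    (rels_check _ (fun s => ac_mul_self _))

/-- The action of `UCox' S` on itself by anti-conjugations. -/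
noncomputable def rho' : UCox' S →* Equiv.Perm (UCox' S) :=
  PresentedGroup.toGroup (f := fun s => ac (PresentedGroup.of s))
    (rels_check _ (fun s => ac_mul_self _))

@[simp] lemma rho_of (s : S) : rho (PresentedGroup.of s) = ac (FreeGroup.of s) :=
  PresentedGroup.toGroup.of _

@[simp] lemma rho'_of (s : S) : rho' (PresentedGroup.of s) = ac (PresentedGroup.of s) :=
  PresentedGroup.toGroup.of _

lemma of_mul_self (s : S) :
    (PresentedGroup.of s : UCox' S) * PresentedGroup.of s = 1 := by
  have hmem : ((FreeGroup.of s) ^ 2 : FreeGroup S) ∈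
      Subgroup.normalClosure {r : FreeGroup S | ∃ s : S, r = (FreeGroup.of s) ^ 2} :=
    Subgroup.subset_normalClosure ⟨s, rfl⟩
  have h2 : PresentedGroup.mk {r : FreeGroup S | ∃ s : S, r = (FreeGroup.of s) ^ 2}
      ((FreeGroup.of s) ^ 2) = 1 := (QuotientGroup.eq_one_iff _).mpr hmem
  rw [sq, _root_.map_mul] at h2
  exact h2

lemma of_inv (s : S) : (PresentedGroup.of s : UCox' S)⁻¹ = PresentedGroup.of s :=
  inv_eq_of_mul_eq_one_right (of_mul_self s)

/-- Induction over the universal Coxeter group. -/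
lemma ucox_ind {C : UCox' S → Prop} (h1 : C 1) (hof : ∀ s, C (PresentedGroup.of s))
    (hmul : ∀ a b, C a → C b → C (a * b)) : ∀ g : UCox' S, C g := by
  intro g
  induction g using PresentedGroup.induction_on with
  | H z =>
    induction z using FreeGroup.induction_on with
    | C1 => simpa using h1
    | of x => exact hof x
    | inv_of x ih =>
      rw [_root_.map_inv]
      show C ((PresentedGroup.of x : UCox' S)⁻¹)
      rw [of_inv]
      exact hof x
    | mul x y hx hy => rw [_root_.map_mul]; exact hmul _ _ hx hy

/-- Equivariance of the quotient map. -/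
lemma pi_rho : ∀ g : UCox' S, ∀ w : FreeGroup S,
    PresentedGroup.mk {r : FreeGroup S | ∃ s : S, r = (FreeGroup.of s) ^ 2} (rho g w)
      = rho' g (PresentedGroup.mk _ w) := by
  refine ucox_ind ?_ ?_ ?_
  · intro w
    simp only [_root_.map_one, Equiv.Perm.one_apply]
  · intro s w
    simp only [rho_of, rho'_of, ac_apply, _root_.map_mul, _root_.map_inv]
    rfl
  · intro a b ha hb w
    simp only [_root_.map_mul, Equiv.Perm.mul_apply, ha, hb]

lemma rho'_conj : ∀ g : UCox' S, ∀ (u : UCox' S) (s : S),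
    rho' g (u * PresentedGroup.of s * u⁻¹) = (g * u) * PresentedGroup.of s * (g * u)⁻¹ := by
  refine ucox_ind ?_ ?_ ?_
  · intro u s
    simp only [_root_.map_one, Equiv.Perm.one_apply, one_mul]
  · intro t u s
    simp only [rho'_of, ac_apply, mul_inv_rev, inv_inv, of_inv, mul_assoc]
  · intro a b ha hb u s
    simp only [_root_.map_mul, Equiv.Perm.mul_apply, hb, ha]
    group

lemma rho_ac : ∀ g : UCox' S, ∀ (a w : FreeGroup S),
    rho g (a * w⁻¹ * a) = rho g a * (rho g w)⁻¹ * rho g a := by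
  refine ucox_ind ?_ ?_ ?_
  · intro a w
    simp only [_root_.map_one, Equiv.Perm.one_apply]
  · intro t a w
    simp only [rho_of, ac_apply, mul_inv_rev, inv_inv]
    group
  · intro g h hg hh a w
    simp only [_root_.map_mul, Equiv.Perm.mul_apply, hh, hg]

lemma rho_conj_apply (g : UCox' S) (s : S) (w : FreeGroup S) :
    rho (g * PresentedGroup.of s * g⁻¹) w
      = rho g (FreeGroup.of s) * w⁻¹ * rho g (FreeGroup.of s) := by
  have h1 : rho (g * PresentedGroup.of s * g⁻¹) w
      = rho g (FreeGroup.of s * ((rho g)⁻¹ w)⁻¹ * FreeGroup.of s) := by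
    simp only [_root_.map_mul, _root_.map_inv, Equiv.Perm.mul_apply, rho_of, ac_apply]
  rw [h1, rho_ac g (FreeGroup.of s) ((rho g)⁻¹ w), Equiv.Perm.inv_def, Equiv.apply_symm_apply]

/-- Any fixed point of `rho (g s g⁻¹)` equals `rho g (of s)`. -/
lemma fix_eq (g : UCox' S) (s : S) (a : FreeGroup S)
    (ha : rho (g * PresentedGroup.of s * g⁻¹) a = a) : a = rho g (FreeGroup.of s) := by
  set m := rho g (FreeGroup.of s) with hm
  have h3 : m * a⁻¹ * m = a := by rw [← rho_conj_apply g s a]; exact ha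
  have h4 : a * m⁻¹ = m * a⁻¹ := by
    calc a * m⁻¹ = (m * a⁻¹ * m) * m⁻¹ := by rw [h3]
    _ = m * a⁻¹ := by group
  have key : (m⁻¹ * a) * (m⁻¹ * a) = 1 := by
    calc (m⁻¹ * a) * (m⁻¹ * a) = m⁻¹ * (a * m⁻¹) * a := by group
    _ = m⁻¹ * (m * a⁻¹) * a := by rw [h4]
    _ = 1 := by group
  have := freeGroup_sq_eq_one key
  have : m = a := inv_mul_eq_one.mp this
  exact this.symm

lemma welldef {g g' : UCox' S} {s s' : S}
    (h : g * PresentedGroup.of s * g⁻¹ = g' * PresentedGroup.of s' * g'⁻¹) :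
    rho g (FreeGroup.of s) = rho g' (FreeGroup.of s') := by
  apply fix_eq g' s'
  rw [← h, rho_conj_apply]
  group

lemma pi_m (g : UCox' S) (s : S) :
    PresentedGroup.mk {r : FreeGroup S | ∃ s : S, r = (FreeGroup.of s) ^ 2}
      (rho g (FreeGroup.of s)) = g * PresentedGroup.of s * g⁻¹ := by
  rw [pi_rho]
  have h1 : (PresentedGroup.mk {r : FreeGroup S | ∃ s : S, r = (FreeGroup.of s) ^ 2}
      (FreeGroup.of s)) = (1 : UCox' S) * PresentedGroup.of s * (1 : UCox' S)⁻¹ := by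
    simp only [one_mul, inv_one, mul_one]
    rfl
  rw [h1, rho'_conj g 1 s, mul_one]

end Main

end FIQAux

/-- The map `φ` from the free involutory quandle `D(S^U)` on `S` (the Dehn quandle of the
universal Coxeter group `U` with respect to its generators) to the core quandle
`Core(F(S))` of the free group on `S`, determined by sending each generator `s` to `s`
and intertwining the quandle operations (`Core` operation: `a * b = b a⁻¹ b`), is an
injective quandle homomorphism. -/
theorem free_involutory_quandle_embeds_core (S : Type*) :
    ∃ φ : conjSet (UCox S) (Set.range (PresentedGroup.of : S → UCox S)) → FreeGroup S,
      Function.Injective φ ∧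
      (∀ s : S, φ ⟨PresentedGroup.of s, UCox.of_mem_conjSet s⟩ = FreeGroup.of s) ∧
      (∀ x y : conjSet (UCox S) (Set.range (PresentedGroup.of : S → UCox S)),
        φ (dehnOp x y) = φ y * (φ x)⁻¹ * φ y) := by
  classical
  have hrep : ∀ x : conjSet (UCox S) (Set.range (PresentedGroup.of : S → UCox S)),
      ∃ p : S × UCox S, (x : UCox S) = p.2 * PresentedGroup.of p.1 * p.2⁻¹ := by
    rintro ⟨x, s', ⟨s, rfl⟩, g, rfl⟩
    exact ⟨⟨s, g⟩, rfl⟩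
  choose rp hx using hrep
  refine ⟨fun x => FIQAux.rho (rp x).2 (FreeGroup.of (rp x).1), ?_, ?_, ?_⟩
  · intro x y hxy
    apply Subtype.ext
    have px := FIQAux.pi_m (S := S) (rp x).2 (rp x).1
    have py := FIQAux.pi_m (S := S) (rp y).2 (rp y).1
    rw [← hx x] at px
    rw [← hx y] at py
    rw [← px, ← py]
    exact congrArg _ hxy
  · intro s
    have hxs := hx ⟨PresentedGroup.of s, UCox.of_mem_conjSet s⟩
    have h := FIQAux.welldef (hxs.symm.trans
      (by group : (PresentedGroup.of s : UCox S) = 1 * PresentedGroup.of s * 1⁻¹))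
    beta_reduce
    rw [h]
    simp
  · intro x y
    have hd : ((dehnOp x y : conjSet (UCox S)
          (Set.range (PresentedGroup.of : S → UCox S))) : UCox S)
        = ((y : UCox S) * (rp x).2) * PresentedGroup.of (rp x).1
            * ((y : UCox S) * (rp x).2)⁻¹ := by
      show (y : UCox S) * (x : UCox S) * (y : UCox S)⁻¹ = _
      rw [hx x]
      group
    have h1 := FIQAux.welldef ((hx (dehnOp x y)).symm.trans hd)
    beta_reduce
    rw [h1, _root_.map_mul, Equiv.Perm.mul_apply, hx y, FIQAux.rho_conj_apply]
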